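/- Assume γ₂ > 0, γ₁ ≠ γ₂, and let Λ₃(t) denote the smallest real root of φ(t,·) for large t (so Λ₃(t) < 0 and Λ₃(t) → 0 as t → ∞). Then −m²¹(t,Λ₃(t))/m²²(t,Λ₃(t)) → +∞ as t → ∞, where m²¹(t,Λ) := γ₂ − γ₁ + (Λ − γ₂d₂)·[t/tanh(t·d₁) + t/tanh(t·d₂)] and m²²(t,Λ) := −Λ·t/sinh(t·d₂). -/

import Mathlib

open Real Filter Asymptotics

/-- The coefficient `A(t)` of the dispersion cubic. -/
noncomputable def funA (d₁ d₂ γ₁ γ₂ t : ℝ) : ℝ :=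
  -(1 / t) * (γ₂ * (t * d₂ + Real.sinh (t * d₂) * Real.cosh (t * d₁) / Real.cosh (t * (d₁ + d₂)))
    + γ₁ * Real.sinh (t * d₁) * Real.cosh (t * d₂) / Real.cosh (t * (d₁ + d₂)))

/-- The coefficient `B(t)` of the dispersion cubic. -/
noncomputable def funB (d₁ d₂ g γ₁ γ₂ t : ℝ) : ℝ :=
  Real.tanh (t * (d₁ + d₂)) * ((γ₂ ^ 2 * d₂ - g) / t
    + γ₂ * (γ₁ - γ₂) * Real.sinh (t * d₁) * Real.sinh (t * d₂) /
        (t ^ 2 * Real.sinh (t * (d₁ + d₂))))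

/-- The coefficient `C(t)` of the dispersion cubic. -/
noncomputable def funC (d₁ d₂ g γ₁ γ₂ t : ℝ) : ℝ :=
  (g * Real.tanh (t * (d₁ + d₂)) / t ^ 2) *
    ((γ₁ - γ₂) * Real.sinh (t * d₁) * Real.sinh (t * d₂) / Real.sinh (t * (d₁ + d₂))
      + γ₂ * d₂ * t)

/-- The dispersion cubic `φ(t,Λ)`. -/
noncomputable def phi (d₁ d₂ g γ₁ γ₂ t Λ : ℝ) : ℝ :=
  Λ ^ 3 + funA d₁ d₂ γ₁ γ₂ t * Λ ^ 2 + funB d₁ d₂ g γ₁ γ₂ t * Λ + funC d₁ d₂ g γ₁ γ₂ t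

/-- The multiplier symbol `m¹¹(t,Λ)`. -/
noncomputable def m11 (d₂ γ₂ t Λ : ℝ) : ℝ := -2 * Λ * (γ₂ * d₂ - Λ) * t / Real.sinh (t * d₂)

/-- The multiplier symbol `m¹²(t,Λ)`. -/
noncomputable def m12 (d₂ g γ₂ t Λ : ℝ) : ℝ :=
  2 * (g + γ₂ * Λ - Λ ^ 2 * t / Real.tanh (t * d₂))

/-- The multiplier symbol `m²¹(t,Λ)`. -/
noncomputable def m21 (d₁ d₂ γ₁ γ₂ t Λ : ℝ) : ℝ :=
  γ₂ - γ₁ + (Λ - γ₂ * d₂) * (t / Real.tanh (t * d₁) + t / Real.tanh (t * d₂))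

/-- The multiplier symbol `m²²(t,Λ)`. -/
noncomputable def m22 (d₂ t Λ : ℝ) : ℝ := -Λ * t / Real.sinh (t * d₂)

/-- along the smallest root `Λ₃`, `−m²¹/m²² → +∞` as `t → ∞`. -/
theorem ratio_m21_m22_smallest_root
    (d₁ d₂ g γ₁ γ₂ : ℝ) (hd₁ : 0 < d₁) (hd₂ : 0 < d₂) (hg : 0 < g)
    (hγ₂ : 0 < γ₂) (hne : γ₁ ≠ γ₂) (Λ₁ Λ₂ Λ₃ : ℝ → ℝ)
    (hroots : ∀ᶠ t in atTop,
      Λ₃ t < Λ₂ t ∧ Λ₂ t < Λ₁ t ∧ 0 < Λ₂ t ∧ Λ₃ t < 0 ∧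
      ∀ Λ : ℝ, phi d₁ d₂ g γ₁ γ₂ t Λ = (Λ - Λ₁ t) * (Λ - Λ₂ t) * (Λ - Λ₃ t))
    (hlim2 : Tendsto Λ₂ atTop (nhds 0))
    (hlim3 : Tendsto Λ₃ atTop (nhds 0)) :
    Tendsto (fun t : ℝ => -(m21 d₁ d₂ γ₁ γ₂ t (Λ₃ t)) / m22 d₂ t (Λ₃ t)) atTop atTop := by
  have ht2 : Tendsto (fun t : ℝ => t * d₂) atTop atTop :=
    Tendsto.atTop_mul_const hd₂ tendsto_id
  have hsinh : Tendsto (fun t : ℝ => Real.sinh (t * d₂)) atTop atTop := by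
    refine tendsto_atTop_mono' atTop ?_ ht2
    filter_upwards [ht2.eventually_gt_atTop 0] with t ht
    exact (Real.self_lt_sinh_iff.2 ht).le
  have hneg : ∀ᶠ t in atTop, Λ₃ t < 0 := hroots.mono fun t h => h.2.2.2.1
  have hnegT : Tendsto (fun t => -Λ₃ t) atTop (nhdsWithin 0 (Set.Ioi 0)) := by
    rw [tendsto_nhdsWithin_iff]
    refine ⟨by simpa using hlim3.neg, hneg.mono fun t h => by simpa using neg_pos.2 h⟩
  have hinv : Tendsto (fun t => (-Λ₃ t)⁻¹) atTop atTop :=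
    tendsto_inv_nhdsGT_zero.comp hnegT
  have hF : Tendsto (fun t => γ₂ * d₂ * (Real.sinh (t * d₂) * (-Λ₃ t)⁻¹)) atTop atTop :=
    Tendsto.const_mul_atTop (by positivity) (hsinh.atTop_mul_atTop₀ hinv)
  refine tendsto_atTop_mono' atTop ?_ hF
  have hc : ∀ᶠ t : ℝ in atTop, γ₂ - γ₁ ≤ γ₂ * d₂ * t :=
    (Tendsto.const_mul_atTop (by positivity) tendsto_id).eventually_ge_atTop (γ₂ - γ₁)
  filter_upwards [hneg, hc, eventually_ge_atTop (1 : ℝ)] with t h3 hc ht1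
  have htpos : 0 < t := lt_of_lt_of_le one_pos ht1
  have hsh2 : 0 < Real.sinh (t * d₂) := Real.sinh_pos_iff.2 (by positivity)
  have hsh1 : 0 < Real.sinh (t * d₁) := Real.sinh_pos_iff.2 (by positivity)
  have htanh : ∀ x : ℝ, 0 < x → 0 < Real.tanh x ∧ Real.tanh x < 1 := by
    intro x hx
    rw [Real.tanh_eq_sinh_div_cosh]
    constructor
    · exact div_pos (Real.sinh_pos_iff.2 hx) (Real.cosh_pos x)
    · rw [div_lt_one (Real.cosh_pos x)]
      exact Real.sinh_lt_cosh x
  have hth1 : 0 < Real.tanh (t * d₁) := (htanh _ (by positivity)).1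
  have hth2 : 0 < Real.tanh (t * d₂) := (htanh _ (by positivity)).1
  have hle1 : t ≤ t / Real.tanh (t * d₁) := by
    rw [le_div_iff₀ hth1]
    nlinarith [(htanh _ (show (0:ℝ) < t * d₁ by positivity)).2]
  have hle2 : t ≤ t / Real.tanh (t * d₂) := by
    rw [le_div_iff₀ hth2]
    nlinarith [(htanh _ (show (0:ℝ) < t * d₂ by positivity)).2]
  have hm21 : m21 d₁ d₂ γ₁ γ₂ t (Λ₃ t) ≤ -(γ₂ * d₂ * t) := by
    have hx : Λ₃ t - γ₂ * d₂ < 0 := by nlinarith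
    have hS : 2 * t ≤ t / Real.tanh (t * d₁) + t / Real.tanh (t * d₂) := by linarith
    have := mul_le_mul_of_nonpos_left hS (le_of_lt hx)
    unfold m21
    nlinarith
  have hm22 : 0 < m22 d₂ t (Λ₃ t) := by
    unfold m22
    have : 0 < -Λ₃ t * t := by nlinarith
    positivity
  rw [le_div_iff₀ hm22]
  have hkey : γ₂ * d₂ * (Real.sinh (t * d₂) * (-Λ₃ t)⁻¹) * m22 d₂ t (Λ₃ t)
      = γ₂ * d₂ * t := by
    unfold m22
    field_simp [ne_of_lt h3, ne_of_gt hsh2]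
  rw [hkey]
  linarith
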